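/- For all x > y > 1: v₁(x) = 2^{αρ̂−1}·c_{αρ}·U(x,y)/g(y) − sin(παρ̂)·(1−αρ̂)·((x−y)^{α−1}/g(y))·∫₁^{z(x,y)} (u−1)^{αρ}(u+1)^{αρ̂−2} du + (α−1)₊·sin(παρ̂)·(∫₁^x ψ_{αρ}(u) du)·((αρ/g(y))·∫₁^y ψ_{αρ̂}(u) du − 1). -/

import Mathlib

open Real MeasureTheory Set Filter intervalIntegral
open scoped Topology

/-- `ψ_{αρ}(u) = (u−1)^{αρ̂−1}(u+1)^{αρ−1}` where `ρ̂ = 1 − ρ`. -/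
noncomputable def psiRho (α ρ : ℝ) (u : ℝ) : ℝ :=
  (u - 1) ^ (α * (1 - ρ) - 1) * (u + 1) ^ (α * ρ - 1)

/-- `ψ_{αρ̂}(u) = (u−1)^{αρ−1}(u+1)^{αρ̂−1}` where `ρ̂ = 1 − ρ`. -/
noncomputable def psiRhoHat (α ρ : ℝ) (u : ℝ) : ℝ :=
  (u - 1) ^ (α * ρ - 1) * (u + 1) ^ (α * (1 - ρ) - 1)

/-- `g(y) = (y−1)^{αρ}(y+1)^{αρ̂−1}`. -/
noncomputable def gfun (α ρ : ℝ) (y : ℝ) : ℝ :=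
  (y - 1) ^ (α * ρ) * (y + 1) ^ (α * (1 - ρ) - 1)

/-- `z(x,y) = |xy−1|/|x−y|`. -/
noncomputable def zfun (x y : ℝ) : ℝ := |x * y - 1| / |x - y|

/-- `c_{αρ} = 2^{αρ}·π·αρ·Γ(αρ)/Γ(1−αρ̂)`. -/
noncomputable def cRho (α ρ : ℝ) : ℝ :=
  2 ^ (α * ρ) * π * (α * ρ) * Real.Gamma (α * ρ) / Real.Gamma (1 - α * (1 - ρ))

/-- The harmonic function `v₁` (defined piecewise for `x > 1` and `x < −1`). -/
noncomputable def v1fun (α ρ : ℝ) (x : ℝ) : ℝ :=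
  if 1 < x then
    Real.sin (π * (α * (1 - ρ))) *
      ((x + 1) * psiRho α ρ x - max (α - 1) 0 * ∫ u in (1:ℝ)..x, psiRho α ρ u)
  else
    Real.sin (π * (α * ρ)) *
      ((|x| - 1) * psiRhoHat α ρ |x| - max (α - 1) 0 * ∫ u in (1:ℝ)..|x|, psiRhoHat α ρ u)

/-- The explicit Profeta–Simon Green function `U(x,y)` (for `x > y > 1` resp. `x < −1 < 1 < y`). -/
noncomputable def Ufun (α ρ : ℝ) (x y : ℝ) : ℝ :=
  if 1 < x then
    (2 ^ (1 - α) / (Real.Gamma (α * ρ) * Real.Gamma (α * (1 - ρ)))) *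
      ((x - y) ^ (α - 1) * (∫ u in (1:ℝ)..zfun x y, psiRhoHat α ρ u)
        - max (α - 1) 0 * (∫ u in (1:ℝ)..y, psiRhoHat α ρ u) * ∫ u in (1:ℝ)..x, psiRho α ρ u)
  else
    (Real.sin (π * (α * ρ)) / Real.sin (π * (α * (1 - ρ)))) *
    (2 ^ (1 - α) / (Real.Gamma (α * ρ) * Real.Gamma (α * (1 - ρ)))) *
      ((y - x) ^ (α - 1) * (∫ u in (1:ℝ)..zfun x y, psiRhoHat α ρ u)
        - max (α - 1) 0 * (∫ u in (1:ℝ)..y, psiRhoHat α ρ u) * ∫ u in (1:ℝ)..|x|, psiRhoHat α ρ u)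


private lemma aux_integrable (p q : ℝ) (hp : -1 < p) (z : ℝ) (hz : 1 ≤ z) :
    IntervalIntegrable (fun u => (u - 1) ^ p * (u + 1) ^ q) volume 1 z := by
  have h1 : IntervalIntegrable (fun u : ℝ => (u - 1) ^ p) volume 1 z := by
    have := (intervalIntegrable_rpow' (a := 0) (b := z - 1) hp).comp_sub_right 1
    simpa using this
  refine h1.mul_continuousOn ?_
  intro u hu
  have hu' : (1:ℝ) ≤ u := by
    rw [uIcc_of_le hz] at hu; exact hu.1
  exact (((continuousAt_id (x := u)).add continuousAt_const).rpow_const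
    (Or.inl (by show (u:ℝ) + 1 ≠ 0; exact ne_of_gt (by linarith)))).continuousWithinAt

private lemma aux_ftc (a b : ℝ) (ha : 0 < a) (z : ℝ) (hz : 1 ≤ z) :
    (a * ∫ u in (1:ℝ)..z, (u - 1) ^ (a - 1) * (u + 1) ^ (b - 1))
      - (1 - b) * ∫ u in (1:ℝ)..z, (u - 1) ^ a * (u + 1) ^ (b - 2)
      = (z - 1) ^ a * (z + 1) ^ (b - 1) := by
  have hi1 : IntervalIntegrable (fun u => (u - 1) ^ (a - 1) * (u + 1) ^ (b - 1)) volume 1 z :=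
    aux_integrable _ _ (by linarith) z hz
  have hi2 : IntervalIntegrable (fun u => (u - 1) ^ a * (u + 1) ^ (b - 2)) volume 1 z :=
    aux_integrable _ _ (by linarith) z hz
  have key : (∫ u in (1:ℝ)..z,
      (a * ((u - 1) ^ (a - 1) * (u + 1) ^ (b - 1))
        - (1 - b) * ((u - 1) ^ a * (u + 1) ^ (b - 2))))
      = (z - 1) ^ a * (z + 1) ^ (b - 1) := by
    have := intervalIntegral.integral_eq_sub_of_hasDeriv_right_of_le hz
      (f := fun u => (u - 1) ^ a * (u + 1) ^ (b - 1))
      (f' := fun u => a * ((u - 1) ^ (a - 1) * (u + 1) ^ (b - 1))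
        - (1 - b) * ((u - 1) ^ a * (u + 1) ^ (b - 2)))
      ?_ ?_ ?_
    · rw [this]
      rw [show (1:ℝ) - 1 = 0 by ring, Real.zero_rpow (ne_of_gt ha)]
      ring
    · intro u hu
      have h1 : ContinuousWithinAt (fun u : ℝ => (u - 1) ^ a) (Icc 1 z) u :=
        (((continuousAt_id (x := u)).sub continuousAt_const).rpow_const
          (Or.inr ha.le)).continuousWithinAt
      have h2 : ContinuousWithinAt (fun u : ℝ => (u + 1) ^ (b - 1)) (Icc 1 z) u :=
        (((continuousAt_id (x := u)).add continuousAt_const).rpow_const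
          (Or.inl (by show (u:ℝ) + 1 ≠ 0; exact ne_of_gt (by linarith [hu.1])))).continuousWithinAt
      exact h1.mul h2
    · intro u hu
      have hu1 : (0:ℝ) < u - 1 := by linarith [hu.1]
      have hu2 : (0:ℝ) < u + 1 := by linarith [hu.1]
      have d1 : HasDerivAt (fun u : ℝ => (u - 1) ^ a) (a * (u - 1) ^ (a - 1) * 1) u :=
        ((Real.hasDerivAt_rpow_const (x := u - 1) (p := a) (Or.inl hu1.ne')).comp u
          ((hasDerivAt_id u).sub_const 1) :)
      have d2 : HasDerivAt (fun u : ℝ => (u + 1) ^ (b - 1))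
          ((b - 1) * (u + 1) ^ (b - 1 - 1) * 1) u :=
        ((Real.hasDerivAt_rpow_const (x := u + 1) (p := b - 1) (Or.inl hu2.ne')).comp u
          ((hasDerivAt_id u).add_const 1) :)
      have := (d1.mul d2).hasDerivWithinAt (s := Ioi u)
      convert this using 1
      · rfl
      rw [show b - 1 - 1 = b - 2 by ring]
      ring
    · exact (hi1.const_mul a).sub (hi2.const_mul (1 - b))
  rw [← key, intervalIntegral.integral_sub (hi1.const_mul a) (hi2.const_mul (1 - b)),
    intervalIntegral.integral_const_mul, intervalIntegral.integral_const_mul]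

private lemma aux_const (α ρ : ℝ) (ha : 0 < α * ρ) (hb : 0 < α * (1 - ρ))
    (hb1 : α * (1 - ρ) < 1) :
    2 ^ (α * (1 - ρ) - 1) * cRho α ρ
      * (2 ^ (1 - α) / (Real.Gamma (α * ρ) * Real.Gamma (α * (1 - ρ))))
      = α * ρ * Real.sin (π * (α * (1 - ρ))) := by
  set a := α * ρ
  set b := α * (1 - ρ)
  have hGa : 0 < Real.Gamma a := Real.Gamma_pos_of_pos ha
  have hGb : 0 < Real.Gamma b := Real.Gamma_pos_of_pos hb
  have hsin : 0 < Real.sin (π * b) := by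
    apply Real.sin_pos_of_pos_of_lt_pi (by positivity)
    nlinarith [Real.pi_pos]
  have href : Real.Gamma b * Real.Gamma (1 - b) = π / Real.sin (π * b) :=
    Real.Gamma_mul_Gamma_one_sub b
  have hG1b : Real.Gamma (1 - b) = π / (Real.sin (π * b) * Real.Gamma b) := by
    field_simp at href ⊢
    linarith [href]
  have h2 : (2:ℝ) ^ (b - 1) * 2 ^ a * 2 ^ (1 - α) = 1 := by
    rw [← Real.rpow_add two_pos, ← Real.rpow_add two_pos,
      show b - 1 + a + (1 - α) = 0 by simp [a, b]; ring, Real.rpow_zero]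
  rw [cRho, hG1b]
  have hπ := Real.pi_pos
  field_simp
  linear_combination (α * ρ * Real.Gamma (α * ρ) * Real.sin (b * π)) * h2

private lemma aux_zgt (x y : ℝ) (hy : 1 < y) (hyx : y < x) :
    1 < zfun x y ∧ zfun x y - 1 = (x + 1) * (y - 1) / (x - y)
      ∧ zfun x y + 1 = (x - 1) * (y + 1) / (x - y) := by
  have hxy : (0:ℝ) < x - y := by linarith
  have hzfun : zfun x y = (x * y - 1) / (x - y) := by
    rw [zfun, abs_of_pos (by nlinarith), abs_of_pos hxy]
  have hzm : zfun x y - 1 = (x + 1) * (y - 1) / (x - y) := by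
    rw [hzfun]; field_simp; ring
  have hzp : zfun x y + 1 = (x - 1) * (y + 1) / (x - y) := by
    rw [hzfun]; field_simp; ring
  refine ⟨?_, hzm, hzp⟩
  have : (0:ℝ) < (x + 1) * (y - 1) / (x - y) := by
    apply div_pos (by nlinarith) hxy
  linarith [hzm ▸ this]

private lemma aux_key (α ρ : ℝ) (x y : ℝ) (hy : 1 < y) (hyx : y < x) :
    (x - y) ^ (α - 1) * ((zfun x y - 1) ^ (α * ρ) * (zfun x y + 1) ^ (α * (1 - ρ) - 1))
      = (x + 1) ^ (α * ρ) * (x - 1) ^ (α * (1 - ρ) - 1)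
        * ((y - 1) ^ (α * ρ) * (y + 1) ^ (α * (1 - ρ) - 1)) := by
  have hxy : (0:ℝ) < x - y := by linarith
  have hx1 : (0:ℝ) < x - 1 := by linarith
  obtain ⟨hz1, hzm, hzp⟩ := aux_zgt x y hy hyx
  have hpow : (x - y) ^ (α * ρ) * (x - y) ^ (α * (1 - ρ) - 1) = (x - y) ^ (α - 1) := by
    rw [← Real.rpow_add hxy]; ring_nf
  rw [hzm, hzp, Real.div_rpow (by nlinarith) hxy.le, Real.div_rpow (by nlinarith) hxy.le,
    Real.mul_rpow (by linarith) (by linarith), Real.mul_rpow (by linarith) (by linarith)]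
  have h1 := (Real.rpow_pos_of_pos hxy (α * ρ)).ne'
  have h2 := (Real.rpow_pos_of_pos hxy (α * (1 - ρ) - 1)).ne'
  field_simp
  linear_combination (-((x + 1) ^ (α * ρ) * (y - 1) ^ (α * ρ))) * hpow

/-- Lemma 3.1 (case `x > y > 1`): pointwise relation between `v₁` and the Green
function `U(x,y)`. -/
theorem stmt_1 (α ρ : ℝ) (hα0 : 0 < α) (hα2 : α < 2) (hρ0 : 0 < ρ) (hρ1 : ρ < 1)
    (hαρ : α * ρ < 1) (hαρh : α * (1 - ρ) < 1)
    (x y : ℝ) (hy : 1 < y) (hyx : y < x) :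
    v1fun α ρ x
      = 2 ^ (α * (1 - ρ) - 1) * cRho α ρ * Ufun α ρ x y / gfun α ρ y
        - Real.sin (π * (α * (1 - ρ))) * (1 - α * (1 - ρ)) * ((x - y) ^ (α - 1) / gfun α ρ y)
            * (∫ u in (1:ℝ)..zfun x y, (u - 1) ^ (α * ρ) * (u + 1) ^ (α * (1 - ρ) - 2))
        + max (α - 1) 0 * Real.sin (π * (α * (1 - ρ))) * (∫ u in (1:ℝ)..x, psiRho α ρ u)
            * ((α * ρ / gfun α ρ y) * (∫ u in (1:ℝ)..y, psiRhoHat α ρ u) - 1) := by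
  have hx1 : 1 < x := hy.trans hyx
  have ha : 0 < α * ρ := mul_pos hα0 hρ0
  have hb : 0 < α * (1 - ρ) := mul_pos hα0 (by linarith)
  have hG : 0 < gfun α ρ y := by
    rw [gfun]
    exact mul_pos (Real.rpow_pos_of_pos (by linarith) _) (Real.rpow_pos_of_pos (by linarith) _)
  obtain ⟨hz1, hzm, hzp⟩ := aux_zgt x y hy hyx
  have hftc := aux_ftc (α * ρ) (α * (1 - ρ)) ha (zfun x y) hz1.le
  have hkey := aux_key α ρ x y hy hyx
  have hc := aux_const α ρ ha hb hαρh
  have hc' : ∀ X : ℝ, 2 ^ (α * (1 - ρ) - 1) * cRho α ρ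
      * (2 ^ (1 - α) / (Real.Gamma (α * ρ) * Real.Gamma (α * (1 - ρ))) * X) / gfun α ρ y
      = α * ρ * Real.sin (π * (α * (1 - ρ))) * X / gfun α ρ y := by
    intro X
    rw [← mul_assoc, hc]
  have hxpsi : (x + 1) * psiRho α ρ x
      = (x + 1) ^ (α * ρ) * (x - 1) ^ (α * (1 - ρ) - 1) := by
    rw [psiRho]
    have h : (x + 1 : ℝ) ^ (α * ρ - 1) * (x + 1) = (x + 1) ^ (α * ρ) := by
      rw [← Real.rpow_add_one (by linarith : (x:ℝ) + 1 ≠ 0)]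
      norm_num
    rw [← h]; ring
  rw [v1fun, if_pos hx1, Ufun, if_pos hx1, hc', hxpsi]
  simp only [psiRhoHat, gfun] at hftc hkey ⊢
  have hGne : (y - 1) ^ (α * ρ) * (y + 1) ^ (α * (1 - ρ) - 1) ≠ 0 := by
    rw [gfun] at hG; exact hG.ne'
  have hy1 : (y - 1) ^ (α * ρ) ≠ 0 := (Real.rpow_pos_of_pos (by linarith) _).ne'
  have hy2 : (y + 1) ^ (α * (1 - ρ) - 1) ≠ 0 := (Real.rpow_pos_of_pos (by linarith) _).ne'
  field_simp
  linear_combination (-(Real.sin (π * α * (1 - ρ))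
      * ((x - y) ^ (α - 1)))) * hftc
    - (Real.sin (π * α * (1 - ρ))) * hkey
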